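/- Let A be a noetherian Z-algebra generated in degree one, and let J ⊆ Z be an infinite subset not bounded above, with B the J-Veronese of A. If M is a graded right A-module whose restriction Res(M) = ⊕_{j∈J} M_j is a torsion B-module (a direct limit of right bounded modules), then M itself is a torsion A-module. -/

import Mathlib

/-- A ℤ-algebra, presented by its components `A_{ij}` with multiplication
`A_{ij} × A_{jk} → A_{ik}` and local units `e_i ∈ A_{ii}`. -/
structure ZAlg where
  C : ℤ → ℤ → Type
  addgrp : ∀ i j, AddCommGroup (C i j)
  mul : ∀ {i j l : ℤ}, C i j → C j l → C i l
  e : ∀ i : ℤ, C i i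
  mul_add : ∀ {i j l : ℤ} (a : C i j) (b c : C j l), mul a (b + c) = mul a b + mul a c
  add_mul : ∀ {i j l : ℤ} (a b : C i j) (c : C j l), mul (a + b) c = mul a c + mul b c
  mul_assoc : ∀ {i j l m : ℤ} (a : C i j) (b : C j l) (c : C l m),
    mul (mul a b) c = mul a (mul b c)
  e_mul : ∀ {i j : ℤ} (a : C i j), mul (e i) a = a
  mul_e : ∀ {i j : ℤ} (a : C i j), mul a (e j) = a

attribute [instance] ZAlg.addgrp

/-- A graded right module `M = ⊕_i M_i` over a ℤ-algebra `A`, with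
`M_i · A_{ij} ⊆ M_j`. -/
structure ZModule (A : ZAlg) where
  M : ℤ → Type
  addgrp : ∀ i, AddCommGroup (M i)
  smul : ∀ {i j : ℤ}, M i → A.C i j → M j
  smul_add : ∀ {i j : ℤ} (m : M i) (a b : A.C i j), smul m (a + b) = smul m a + smul m b
  add_smul : ∀ {i j : ℤ} (m n : M i) (a : A.C i j), smul (m + n) a = smul m a + smul n a
  smul_mul : ∀ {i j l : ℤ} (m : M i) (a : A.C i j) (b : A.C j l),
    smul (smul m a) b = smul m (A.mul a b)
  smul_e : ∀ {i : ℤ} (m : M i), smul m (A.e i) = m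

attribute [instance] ZModule.addgrp

/-- The projective right module `P_i = e_i A`. -/
def ZAlg.P (A : ZAlg) (i : ℤ) : ZModule A where
  M j := A.C i j
  addgrp _ := A.addgrp _ _
  smul m a := A.mul m a
  smul_add m a b := A.mul_add m a b
  add_smul m n a := A.add_mul m n a
  smul_mul m a b := A.mul_assoc m a b
  smul_e m := A.mul_e m

/-- A graded submodule of a graded right module. -/
structure SubZMod {A : ZAlg} (N : ZModule A) where
  car : ∀ i : ℤ, AddSubgroup (N.M i)
  smul_mem : ∀ {i j : ℤ} (m : N.M i), m ∈ car i → ∀ a : A.C i j, N.smul m a ∈ car j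

/-- A ℤ-algebra is noetherian when the projective generators `P_i` are noetherian
objects, i.e. every ascending chain of graded submodules of `P_i` stabilizes. -/
def ZAlg.Noetherian (A : ZAlg) : Prop :=
  ∀ i : ℤ, ∀ c : ℕ → SubZMod (A.P i),
    (∀ n : ℕ, ∀ j : ℤ, ((c n).car j : Set ((A.P i).M j)) ⊆ (c (n + 1)).car j) →
    ∃ N : ℕ, ∀ n : ℕ, N ≤ n → c n = c N

section Aux

lemma ZAlg.zero_mul' (A : ZAlg) {i j l : ℤ} (b : A.C j l) : A.mul (0 : A.C i j) b = 0 := by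
  have h := A.add_mul (0 : A.C i j) 0 b
  rw [add_zero] at h
  exact (left_eq_add.mp h)

lemma ZAlg.mul_zero' (A : ZAlg) {i j l : ℤ} (a : A.C i j) : A.mul a (0 : A.C j l) = 0 := by
  have h := A.mul_add a (0 : A.C j l) 0
  rw [add_zero] at h
  exact (left_eq_add.mp h)

lemma ZAlg.mul_neg' (A : ZAlg) {i j l : ℤ} (a : A.C i j) (b : A.C j l) :
    A.mul a (-b) = -(A.mul a b) := by
  have h := A.mul_add a b (-b)
  rw [add_neg_cancel, A.mul_zero'] at h
  exact (neg_eq_of_add_eq_zero_right h.symm).symm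

lemma ZModule.smul_zero' {A : ZAlg} (M : ZModule A) {i j : ℤ} (m : M.M i) :
    M.smul m (0 : A.C i j) = 0 := by
  have h := M.smul_add m (0 : A.C i j) 0
  rw [add_zero] at h
  exact (left_eq_add.mp h)

lemma ZModule.zero_smul' {A : ZAlg} (M : ZModule A) {i j : ℤ} (a : A.C i j) :
    M.smul (0 : M.M i) a = 0 := by
  have h := M.add_smul (0 : M.M i) 0 a
  rw [add_zero] at h
  exact (left_eq_add.mp h)

lemma ZModule.smul_neg' {A : ZAlg} (M : ZModule A) {i j : ℤ} (m : M.M i) (a : A.C i j) :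
    M.smul m (-a) = -(M.smul m a) := by
  have h := M.smul_add m a (-a)
  rw [add_neg_cancel, M.smul_zero'] at h
  exact (neg_eq_of_add_eq_zero_right h.symm).symm

/-- Factorization through an intermediate degree, for algebras generated in degree one:
every element of `A_{k,l}` lies in the subgroup generated by products
`A_{k,mid} · A_{mid,l}`, whenever `k ≤ mid ≤ l`. -/
lemma ZAlg.factor (A : ZAlg)
    (hgen : ∀ i l : ℤ, i + 1 < l → ∀ x : A.C i l,
      x ∈ AddSubgroup.closure
        {y : A.C i l | ∃ (a : A.C i (i + 1)) (b : A.C (i + 1) l), y = A.mul a b}) :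
    ∀ (d : ℕ) (k mid l : ℤ), mid - k = (d : ℤ) → mid ≤ l → ∀ x : A.C k l,
      x ∈ AddSubgroup.closure
        {y : A.C k l | ∃ (a : A.C k mid) (b : A.C mid l), y = A.mul a b} := by
  intro d
  induction d with
  | zero =>
    intro k mid l hd _ x
    have hmk : mid = k := by omega
    subst hmk
    exact AddSubgroup.subset_closure ⟨A.e mid, x, (A.e_mul x).symm⟩
  | succ d ih =>
    intro k mid l hd hml x
    have hk1 : k + 1 ≤ mid := by omega
    have hkl : k + 1 ≤ l := le_trans hk1 hml
    rcases eq_or_lt_of_le hkl with hl | hl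
    · -- then mid = l
      have hml' : mid = l := by omega
      subst hml'
      exact AddSubgroup.subset_closure ⟨x, A.e mid, (A.mul_e x).symm⟩
    · have hx := hgen k l hl x
      have key : {y : A.C k l | ∃ (a : A.C k (k + 1)) (b : A.C (k + 1) l), y = A.mul a b} ⊆
          (AddSubgroup.closure
            {y : A.C k l | ∃ (a : A.C k mid) (b : A.C mid l), y = A.mul a b} : Set (A.C k l)) := by
        rintro y ⟨a, b, rfl⟩
        have ihb := ih (k + 1) mid l (by omega) hml b
        refine AddSubgroup.closure_induction
          (p := fun z _ => A.mul a z ∈ AddSubgroup.closure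
            {y : A.C k l | ∃ (a : A.C k mid) (b : A.C mid l), y = A.mul a b})
          ?_ ?_ ?_ ?_ ihb
        · rintro z ⟨c, e', rfl⟩
          rw [← A.mul_assoc]
          exact AddSubgroup.subset_closure ⟨A.mul a c, e', rfl⟩
        · show A.mul a (0 : A.C (k + 1) l) ∈ _
          rw [A.mul_zero']
          exact zero_mem _
        · intro z₁ z₂ _ _ h₁ h₂
          rw [A.mul_add]
          exact add_mem h₁ h₂
        · intro z _ h
          rw [A.mul_neg']
          exact neg_mem h
      exact (AddSubgroup.closure_le _).mpr key hx

end Aux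

/-- Let `A` be a noetherian ℤ-algebra which is positively graded and
generated in degree one, `J ⊆ ℤ` an infinite subset not bounded above and `B` the
`J`-Veronese of `A`.  If `M` is a graded right `A`-module whose restriction
`Res M = ⊕_{j ∈ J} M_j` is a torsion `B`-module (every element is annihilated by
`B_{kl} = A_{kl}` for `l ∈ J` large), then `M` itself is torsion (every element `m ∈ M_k`
satisfies `m · A_{kl} = 0` for all `l ≫ 0`). -/
theorem veronese_restriction_detects_torsion
    (A : ZAlg)
    (hNoeth : A.Noetherian)
    -- A is positively graded …
    (hpos : ∀ i j : ℤ, j < i → ∀ a : A.C i j, a = 0)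
    -- … and generated in degree one
    (hgen : ∀ i l : ℤ, i + 1 < l → ∀ x : A.C i l,
      x ∈ AddSubgroup.closure
        {y : A.C i l | ∃ (a : A.C i (i + 1)) (b : A.C (i + 1) l), y = A.mul a b})
    (J : Set ℤ) (hJinf : J.Infinite) (hJub : ∀ n : ℤ, ∃ j ∈ J, n ≤ j)
    (M : ZModule A)
    -- the restriction of M to the J-Veronese of A is torsion
    (hres : ∀ k ∈ J, ∀ m : M.M k, ∃ N : ℤ, ∀ l ∈ J, N ≤ l →
      ∀ a : A.C k l, M.smul m a = 0) :
    -- M itself is torsion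
    ∀ (k : ℤ) (m : M.M k), ∃ N : ℤ, ∀ l : ℤ, N ≤ l → ∀ a : A.C k l, M.smul m a = 0 := by
  intro k m
  -- a strictly increasing sequence in J
  choose g hgJ hgle using hJub
  let jseq : ℕ → ℤ := fun n => Nat.rec (g 0) (fun _ prev => g (prev + 1)) n
  have hjJ : ∀ n, jseq n ∈ J := by
    intro n
    cases n with
    | zero => exact hgJ 0
    | succ n => exact hgJ _
  have hjstep : ∀ n, jseq n + 1 ≤ jseq (n + 1) := fun n => hgle _
  have hjmono : ∀ n : ℕ, (n : ℤ) + jseq 0 ≤ jseq n := by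
    intro n
    induction n with
    | zero => simp
    | succ n ih =>
      have h := hjstep n
      push_cast
      omega
  -- the ascending chain of submodules of P_k
  let c : ℕ → SubZMod (A.P k) := fun n =>
    { car := fun l =>
        { carrier := {a : A.C k l | ∀ l' ∈ J, jseq n ≤ l' →
            ∀ b : A.C l l', M.smul m (A.mul a b) = 0}
          zero_mem' := by
            intro l' _ _ b
            show M.smul m (A.mul (0 : A.C k l) b) = 0
            rw [A.zero_mul', M.smul_zero']
          add_mem' := by
            intro a₁ a₂ h₁ h₂ l' hl' hle b
            show M.smul m (A.mul (@HAdd.hAdd (A.C k l) (A.C k l) (A.C k l) instHAdd (@id (A.C k l) a₁) (@id (A.C k l) a₂)) b) = 0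
            rw [A.add_mul, M.smul_add, show M.smul m (A.mul (@id (A.C k l) a₁) b) = 0 from h₁ l' hl' hle b, show M.smul m (A.mul (@id (A.C k l) a₂) b) = 0 from h₂ l' hl' hle b, add_zero]
          neg_mem' := by
            intro a h l' hl' hle b
            show M.smul m (A.mul (@Neg.neg (A.C k l) _ (@id (A.C k l) a)) b) = 0
            have hneg : A.mul (@Neg.neg (A.C k l) _ (@id (A.C k l) a)) b = -(A.mul (@id (A.C k l) a) b) := by
              have h' := A.add_mul (@id (A.C k l) a) (@Neg.neg (A.C k l) _ (@id (A.C k l) a)) b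
              rw [add_neg_cancel, A.zero_mul'] at h'
              exact (neg_eq_of_add_eq_zero_right h'.symm).symm
            rw [hneg, M.smul_neg', show M.smul m (A.mul (@id (A.C k l) a) b) = 0 from h l' hl' hle b, neg_zero] }
      smul_mem := by
        intro i j a ha x l' hl' hle b
        show M.smul m (A.mul (A.mul (@id (A.C k i) a) x) b) = 0
        rw [A.mul_assoc]
        exact ha l' hl' hle (A.mul x b) }
  have hchain : ∀ n : ℕ, ∀ l : ℤ,
      ((c n).car l : Set ((A.P k).M l)) ⊆ (c (n + 1)).car l := by
    intro n l a ha l' hl' hle b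
    exact ha l' hl' (le_trans (by have := hjstep n; omega) hle) b
  obtain ⟨n₀, hstab⟩ := hNoeth k c hchain
  -- every element of A_{k,l} with l ∈ J lies in c n₀
  have claimA : ∀ l ∈ J, ∀ a : A.C k l, a ∈ (c n₀).car l := by
    intro l hl a
    obtain ⟨N, hN⟩ := hres l hl (M.smul m a)
    set n := max n₀ (N - jseq 0).toNat with hn
    have hn0 : n₀ ≤ n := le_max_left _ _
    have hjn : N ≤ jseq n := by
      have h₁ := hjmono n
      have h₂ : (N - jseq 0).toNat ≤ n := le_max_right _ _
      have h₃ : ((N - jseq 0).toNat : ℤ) ≤ (n : ℤ) := by exact_mod_cast h₂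
      omega
    have hmem : a ∈ (c n).car l := by
      intro l' hl' hle b
      rw [← M.smul_mul]
      exact hN l' hl' (le_trans hjn hle) b
    rw [hstab n hn0] at hmem
    exact hmem
  -- pick l' ∈ J with l' ≥ max k (jseq n₀); then m · A_{k,l'} = 0
  set l' := g (max k (jseq n₀)) with hl'def
  have hl'J : l' ∈ J := hgJ _
  have hl'ge : max k (jseq n₀) ≤ l' := hgle _
  have hkill : ∀ a : A.C k l', M.smul m a = 0 := by
    intro a
    have h := claimA l' hl'J a l' hl'J (le_trans (le_max_right _ _) hl'ge) (A.e l')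
    rwa [A.mul_e] at h
  -- conclude using factorization through degree l'
  refine ⟨l', fun l hll x => ?_⟩
  have hkl' : k ≤ l' := le_trans (le_max_left _ _) hl'ge
  have hfact := A.factor hgen (l' - k).toNat k l' l (by omega) hll x
  refine AddSubgroup.closure_induction
    (p := fun z _ => M.smul m z = 0) ?_ ?_ ?_ ?_ hfact
  · rintro z ⟨a, b, rfl⟩
    rw [← M.smul_mul, hkill a, M.zero_smul']
  · exact M.smul_zero' m
  · intro z₁ z₂ _ _ h₁ h₂
    rw [M.smul_add, h₁, h₂, add_zero]
  · intro z _ h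
    rw [M.smul_neg', h, neg_zero]
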